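/- Let λ > 0 and let V be the set of continuously differentiable functions φ : [−1,1] → ℝ with φ(−1) = φ(1) = 0. Define Ψ_λ(φ) = ∫_{−1}^{1} √(φ² + λ²·(φ′)²) dr, m̃(θ) = inf_{φ∈V} ( Ψ_λ(φ) − θ∫_{−1}^{1} φ dr ), and θ̂_Y(λ) = inf{ Ψ_λ(φ) : φ ∈ V, ∫_{−1}^{1} φ dr = 1 }. Then θ̂_Y(λ) = inf{ θ ≥ 0 : m̃(θ) < 0 }. -/

import Mathlib

/-- The set `V` of admissible test functions: C¹ functions on `[−1,1]`
vanishing at `±1`. -/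
def V : Set (ℝ → ℝ) := {φ | ContDiff ℝ 1 φ ∧ φ (-1) = 0 ∧ φ 1 = 0}

/-- The renormalized plastic dissipation `Ψ_λ(φ) = ∫_{-1}^{1} √(φ² + λ²·(φ')²) dr`. -/
noncomputable def Psi (lam : ℝ) (φ : ℝ → ℝ) : ℝ :=
  ∫ r in (-1 : ℝ)..1, Real.sqrt ((φ r) ^ 2 + lam ^ 2 * (deriv φ r) ^ 2)

/-- The reduced stability indicator
`m̃(θ) = inf_{φ ∈ V} (Ψ_λ(φ) − θ∫φ)` (valued in `EReal`, since the infimum may a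
priori be `−∞`). -/
noncomputable def mTilde (lam θ : ℝ) : EReal :=
  ⨅ φ : V, ((Psi lam φ.1 - θ * ∫ r in (-1 : ℝ)..1, φ.1 r : ℝ) : EReal)

/-- The renormalized yield shear stress
`θ̂_Y(λ) = inf { Ψ_λ(φ) : φ ∈ V, ∫φ = 1 }`. -/
noncomputable def thetaY (lam : ℝ) : ℝ :=
  sInf {t : ℝ | ∃ φ ∈ V, (∫ r in (-1 : ℝ)..1, φ r) = 1 ∧ Psi lam φ = t}

lemma Psi_nonneg (lam : ℝ) (φ : ℝ → ℝ) : 0 ≤ Psi lam φ :=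
  intervalIntegral.integral_nonneg (by norm_num) (fun x _ => Real.sqrt_nonneg _)

lemma Psi_smul (lam c : ℝ) (hc : 0 ≤ c) (φ : ℝ → ℝ) (hφ : ContDiff ℝ 1 φ) :
    Psi lam (fun x => c * φ x) = c * Psi lam φ := by
  have hdiff : Differentiable ℝ φ := hφ.differentiable one_ne_zero
  unfold Psi
  rw [← intervalIntegral.integral_const_mul]
  refine intervalIntegral.integral_congr fun x _ => ?_
  rw [deriv_const_mul c (hdiff x)]
  rw [show (c * φ x) ^ 2 + lam ^ 2 * (c * deriv φ x) ^ 2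
      = c ^ 2 * ((φ x) ^ 2 + lam ^ 2 * (deriv φ x) ^ 2) by ring,
    Real.sqrt_mul (sq_nonneg c), Real.sqrt_sq hc]

lemma phi0_mem : (fun r : ℝ => 3/4 * (1 - r ^ 2)) ∈ V := by
  refine ⟨?_, by norm_num, by norm_num⟩
  exact contDiff_const.mul (contDiff_const.sub (contDiff_id.pow 2))

lemma phi0_integral : (∫ r in (-1:ℝ)..1, 3/4 * (1 - r ^ 2)) = 1 := by
  have h1 : IntervalIntegrable (fun _ : ℝ => (1:ℝ)) MeasureTheory.volume (-1) 1 :=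
    intervalIntegrable_const
  have h2 : IntervalIntegrable (fun r : ℝ => r ^ 2) MeasureTheory.volume (-1) 1 :=
    (intervalIntegral.intervalIntegrable_pow 2)
  rw [intervalIntegral.integral_const_mul, intervalIntegral.integral_sub h1 h2,
    intervalIntegral.integral_const, integral_pow]
  norm_num

lemma S_nonempty (lam : ℝ) :
    {t : ℝ | ∃ φ ∈ V, (∫ r in (-1 : ℝ)..1, φ r) = 1 ∧ Psi lam φ = t}.Nonempty :=
  ⟨Psi lam (fun r : ℝ => 3/4 * (1 - r ^ 2)),
    (fun r : ℝ => 3/4 * (1 - r ^ 2)), phi0_mem, phi0_integral, rfl⟩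

lemma S_bdd (lam : ℝ) :
    BddBelow {t : ℝ | ∃ φ ∈ V, (∫ r in (-1 : ℝ)..1, φ r) = 1 ∧ Psi lam φ = t} :=
  ⟨0, fun t ⟨φ, _, _, hψ⟩ => hψ ▸ Psi_nonneg lam φ⟩

lemma thetaY_nonneg (lam : ℝ) : 0 ≤ thetaY lam :=
  le_csInf (S_nonempty lam) (fun t ⟨φ, _, _, hψ⟩ => hψ ▸ Psi_nonneg lam φ)

/-- Core of the proof of Theorem 3.1 (equations (32)–(33)): the constrained infimum
`θ̂_Y(λ)` of the dissipation equals the smallest stress level at which the reduced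
stability indicator becomes negative. -/
theorem thetaY_eq_inf_instability (lam : ℝ) (hlam : 0 < lam) :
    thetaY lam = sInf {θ : ℝ | 0 ≤ θ ∧ mTilde lam θ < 0} := by
  have hset : {θ : ℝ | 0 ≤ θ ∧ mTilde lam θ < 0} = Set.Ioi (thetaY lam) := by
    ext θ
    simp only [Set.mem_setOf_eq, Set.mem_Ioi]
    constructor
    · rintro ⟨hθ, hm⟩
      -- m̃ < 0 gives a witness
      rw [mTilde, iInf_lt_iff] at hm
      obtain ⟨⟨φ, hφV⟩, hlt⟩ := hm
      have hlt' : Psi lam φ - θ * ∫ r in (-1:ℝ)..1, φ r < 0 := by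
        exact_mod_cast hlt
      set I := ∫ r in (-1:ℝ)..1, φ r with hI
      have hpos : 0 < θ * I := lt_of_le_of_lt (Psi_nonneg lam φ) (by linarith)
      have hIpos : 0 < I := by
        by_contra h
        push_neg at h
        have : θ * I ≤ 0 := mul_nonpos_of_nonneg_of_nonpos hθ h
        linarith
      set c := I⁻¹ with hc
      have hcpos : 0 < c := inv_pos.mpr hIpos
      have hψV : (fun x => c * φ x) ∈ V :=
        ⟨contDiff_const.mul hφV.1, by simp [hφV.2.1], by simp [hφV.2.2]⟩
      have hψint : (∫ r in (-1:ℝ)..1, c * φ r) = 1 := by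
        rw [intervalIntegral.integral_const_mul, ← hI, hc, inv_mul_cancel₀ hIpos.ne']
      have hψPsi : Psi lam (fun x => c * φ x) = c * Psi lam φ :=
        Psi_smul lam c hcpos.le φ hφV.1
      have h1 : thetaY lam ≤ c * Psi lam φ := by
        rw [← hψPsi]
        exact csInf_le (S_bdd lam) ⟨(fun x => c * φ x), hψV, hψint, rfl⟩
      have h2 : c * Psi lam φ < θ := by
        have : c * Psi lam φ < c * (θ * I) := by
          apply mul_lt_mul_of_pos_left _ hcpos
          linarith
        calc c * Psi lam φ < c * (θ * I) := this
          _ = θ := by rw [hc, mul_comm θ I, ← mul_assoc, inv_mul_cancel₀ hIpos.ne', one_mul]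
      linarith
    · intro hθ
      have hθ0 : 0 ≤ θ := le_of_lt (lt_of_le_of_lt (thetaY_nonneg lam) hθ)
      refine ⟨hθ0, ?_⟩
      obtain ⟨t, ⟨φ, hφV, hint, hPsi⟩, ht⟩ :=
        (csInf_lt_iff (S_bdd lam) (S_nonempty lam)).mp hθ
      rw [mTilde]
      refine lt_of_le_of_lt (iInf_le _ ⟨φ, hφV⟩) ?_
      have : Psi lam φ - θ * ∫ r in (-1:ℝ)..1, φ r < 0 := by
        rw [hint]; linarith [hPsi ▸ ht]
      exact_mod_cast this
  rw [hset, csInf_Ioi]
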